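/- Let k ≥ 1, m ≥ 1, len = k + m, let n ≥ m, and let A be an orthogonal array OA(n, N_g) where N_g = ⌈len/m⌉. Fix a stripe i ∈ Fin (n²). Define the placement map sending the block that is the k'-th element of group j under the D³ grouping to the pair (j, (A i j + k') mod n) ∈ Fin N_g × Fin n (rack j, node (A i j + k') mod n). Then this placement map from Fin len is injective, and for every rack j the number of blocks of the stripe placed in rack j is at most m. Consequently, any set of m failed nodes holds at most m blocks of the stripe, and any single failed rack holds at most m blocks of the stripe, so in either failure event at least k blocks of the stripe survive (D³ tolerates either m node failures or one rack failure). -/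

import Mathlib

/-- Ceiling division of naturals: `⌈a / b⌉ = (a + b - 1) / b`. -/
def cdiv (a b : ℕ) : ℕ := (a + b - 1) / b

/-- `N_g = ⌈len / m⌉`, the number of groups of the D³ grouping. -/
def Ng (len m : ℕ) : ℕ := cdiv len m

/-- `Size_max = ⌈len / N_g⌉`. -/
def sizeMax (len m : ℕ) : ℕ := cdiv len (Ng len m)

/-- `Size_min = ⌊len / N_g⌋`. -/
def sizeMin (len m : ℕ) : ℕ := len / Ng len m

/-- `t = len mod N_g`, the number of groups of size `Size_max`. -/
def tG (len m : ℕ) : ℕ := len % Ng len m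

/-- The size of the `j`-th group of the D³ grouping: the first `t` groups have
`Size_max` blocks, the remaining `N_g - t` groups have `Size_min` blocks. -/
def groupSize (len m j : ℕ) : ℕ :=
  if j < tG len m then sizeMax len m else sizeMin len m

/-- The index of the group of the D³ grouping containing block `x`
(the groups are consecutive runs of block indices). -/
def groupOf (len m x : ℕ) : ℕ :=
  if x < tG len m * sizeMax len m then x / sizeMax len m
  else tG len m + (x - tG len m * sizeMax len m) / sizeMin len m

/-- The position of block `x` within its group under the D³ grouping. -/
def offsetOf (len m x : ℕ) : ℕ :=
  if x < tG len m * sizeMax len m then x % sizeMax len m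
  else (x - tG len m * sizeMax len m) % sizeMin len m

/-- An orthogonal array OA(n, k): a function `A : Fin (n²) → Fin k → Fin n` such that
for any two distinct columns the induced pair map is bijective. -/
def IsOA (n k : ℕ) (A : Fin (n ^ 2) → Fin k → Fin n) : Prop :=
  ∀ j₁ j₂ : Fin k, j₁ ≠ j₂ → Function.Bijective (fun i => (A i j₁, A i j₂))


lemma cdiv_le_iff {a b c : ℕ} (hb : 1 ≤ b) : cdiv a b ≤ c ↔ a ≤ b * c := by
  unfold cdiv
  rw [Nat.div_le_iff_le_mul_add_pred hb]
  omega

lemma cdiv_pos {a b : ℕ} (ha : 1 ≤ a) (hb : 1 ≤ b) : 1 ≤ cdiv a b := by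
  by_contra h
  have h0 : cdiv a b ≤ 0 := by omega
  rw [cdiv_le_iff hb] at h0
  omega

lemma Ng_pos {len m : ℕ} (hl : 1 ≤ len) (hm : 1 ≤ m) : 1 ≤ Ng len m :=
  cdiv_pos hl hm

lemma Ng_le_len {len m : ℕ} (hl : 1 ≤ len) (hm : 1 ≤ m) : Ng len m ≤ len := by
  rw [Ng, cdiv_le_iff hm]
  calc len = 1 * len := (Nat.one_mul len).symm
    _ ≤ m * len := Nat.mul_le_mul_right len hm

lemma sizeMin_pos {len m : ℕ} (hl : 1 ≤ len) (hm : 1 ≤ m) : 1 ≤ sizeMin len m := by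
  rw [sizeMin, Nat.one_le_div_iff (Ng_pos hl hm)]
  exact Ng_le_len hl hm

lemma sizeMin_le_sizeMax {len m : ℕ} (hl : 1 ≤ len) (hm : 1 ≤ m) :
    sizeMin len m ≤ sizeMax len m := by
  have h := Ng_pos hl hm
  rw [sizeMin, sizeMax, cdiv]
  apply Nat.div_le_div_right
  omega

lemma sizeMax_pos {len m : ℕ} (hl : 1 ≤ len) (hm : 1 ≤ m) : 1 ≤ sizeMax len m :=
  le_trans (sizeMin_pos hl hm) (sizeMin_le_sizeMax hl hm)

lemma sizeMax_le_m {len m : ℕ} (hl : 1 ≤ len) (hm : 1 ≤ m) : sizeMax len m ≤ m := by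
  rw [sizeMax, cdiv_le_iff (Ng_pos hl hm)]
  have h := (cdiv_le_iff (a := len) (b := m) hm).mp le_rfl
  rw [Ng]
  calc len ≤ m * cdiv len m := h
    _ = cdiv len m * m := Nat.mul_comm _ _

lemma offsetOf_lt {len m x : ℕ} (hl : 1 ≤ len) (hm : 1 ≤ m) :
    offsetOf len m x < sizeMax len m := by
  rw [offsetOf]
  split
  · exact Nat.mod_lt _ (sizeMax_pos hl hm)
  · exact lt_of_lt_of_le (Nat.mod_lt _ (sizeMin_pos hl hm)) (sizeMin_le_sizeMax hl hm)

lemma pair_inj {len m x y : ℕ} (hl : 1 ≤ len) (hm : 1 ≤ m)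
    (hg : groupOf len m x = groupOf len m y)
    (ho : offsetOf len m x = offsetOf len m y) : x = y := by
  have hM : 0 < sizeMax len m := sizeMax_pos hl hm
  have hs : 0 < sizeMin len m := sizeMin_pos hl hm
  rw [groupOf, groupOf] at hg
  rw [offsetOf, offsetOf] at ho
  by_cases hx : x < tG len m * sizeMax len m <;>
    by_cases hy : y < tG len m * sizeMax len m
  · rw [if_pos hx, if_pos hy] at hg ho
    have h1 := Nat.div_add_mod x (sizeMax len m)
    have h2 := Nat.div_add_mod y (sizeMax len m)
    rw [hg, ho] at h1
    omega
  · rw [if_pos hx, if_neg hy] at hg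
    have hlt : x / sizeMax len m < tG len m :=
      Nat.div_lt_of_lt_mul (by rw [Nat.mul_comm]; exact hx)
    have h0 : tG len m ≤ x / sizeMax len m := by
      rw [hg]; exact Nat.le_add_right _ _
    omega
  · rw [if_neg hx, if_pos hy] at hg
    have hlt : y / sizeMax len m < tG len m :=
      Nat.div_lt_of_lt_mul (by rw [Nat.mul_comm]; exact hy)
    have h0 : tG len m ≤ y / sizeMax len m := by
      rw [← hg]; exact Nat.le_add_right _ _
    omega
  · rw [if_neg hx, if_neg hy] at hg ho
    have hq : (x - tG len m * sizeMax len m) / sizeMin len m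
        = (y - tG len m * sizeMax len m) / sizeMin len m := by omega
    have h1 := Nat.div_add_mod (x - tG len m * sizeMax len m) (sizeMin len m)
    have h2 := Nat.div_add_mod (y - tG len m * sizeMax len m) (sizeMin len m)
    rw [hq, ho] at h1
    omega

/-- Theorem 3: the D³ placement map of a stripe (block `x`, the `k'`-th element of
group `j`, is placed on node `(A i j + k') mod n` of rack `j`) is injective, every
rack holds at most `m` blocks of the stripe, any `m` failed nodes hold at most `m`
blocks of the stripe, and in either failure event (any `m` node failures or any
single rack failure) at least `k` blocks of the stripe survive. -/
theorem d3_tolerates_m_nodes_or_one_rack (k m n : ℕ)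
    (hk : 1 ≤ k) (hm : 1 ≤ m) (hmn : m ≤ n)
    (A : Fin (n ^ 2) → Fin (Ng (k + m) m) → Fin n)
    (hA : IsOA n (Ng (k + m) m) A)
    (i : Fin (n ^ 2))
    (P : Fin (k + m) → Fin (Ng (k + m) m) × Fin n)
    (hP : ∀ x : Fin (k + m),
      ((P x).1 : ℕ) = groupOf (k + m) m (x : ℕ) ∧
      ((P x).2 : ℕ) = ((A i (P x).1 : ℕ) + offsetOf (k + m) m (x : ℕ)) % n) :
    Function.Injective P ∧
    (∀ j : Fin (Ng (k + m) m),
      (Finset.univ.filter (fun x : Fin (k + m) => (P x).1 = j)).card ≤ m) ∧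
    (∀ F : Finset (Fin (Ng (k + m) m) × Fin n), F.card = m →
      (Finset.univ.filter (fun x : Fin (k + m) => P x ∈ F)).card ≤ m) ∧
    (∀ F : Finset (Fin (Ng (k + m) m) × Fin n), F.card = m →
      k ≤ (Finset.univ.filter (fun x : Fin (k + m) => P x ∉ F)).card) ∧
    (∀ j : Fin (Ng (k + m) m),
      k ≤ (Finset.univ.filter (fun x : Fin (k + m) => (P x).1 ≠ j)).card) := by

  have hl : 1 ≤ k + m := by omega
  have hn : 1 ≤ n := le_trans hm hmn
  have hoffn : ∀ x : ℕ, offsetOf (k + m) m x < n :=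
    fun x => lt_of_lt_of_le (offsetOf_lt hl hm) (le_trans (sizeMax_le_m hl hm) hmn)
  have hinj : Function.Injective P := by
    intro x y hxy
    obtain ⟨hx1, hx2⟩ := hP x
    obtain ⟨hy1, hy2⟩ := hP y
    have hg : groupOf (k + m) m (x : ℕ) = groupOf (k + m) m (y : ℕ) := by
      rw [← hx1, ← hy1, hxy]
    have h1 : (P x).1 = (P y).1 := by rw [hxy]
    have h2 : ((P x).2 : ℕ) = ((P y).2 : ℕ) := by rw [hxy]
    rw [hx2, hy2, h1] at h2
    have ho : offsetOf (k + m) m (x : ℕ) = offsetOf (k + m) m (y : ℕ) := by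
      have hme : offsetOf (k + m) m (x : ℕ) ≡ offsetOf (k + m) m (y : ℕ) [MOD n] :=
        Nat.ModEq.add_left_cancel' _ h2
      have h3 : offsetOf (k + m) m (x : ℕ) % n = offsetOf (k + m) m (y : ℕ) % n := hme
      rw [Nat.mod_eq_of_lt (hoffn x), Nat.mod_eq_of_lt (hoffn y)] at h3
      exact h3
    exact Fin.ext (pair_inj hl hm hg ho)
  have hrack : ∀ j : Fin (Ng (k + m) m),
      (Finset.univ.filter (fun x : Fin (k + m) => (P x).1 = j)).card ≤ m := by
    intro j
    have hcard : (Finset.univ.filter (fun x : Fin (k + m) => (P x).1 = j)).card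
        ≤ (Finset.range (sizeMax (k + m) m)).card := by
      refine Finset.card_le_card_of_injOn (fun x : Fin (k + m) => offsetOf (k + m) m (x : ℕ)) ?_ ?_
      · intro x _
        rw [Finset.mem_coe, Finset.mem_range]
        exact offsetOf_lt hl hm
      · intro x hx y hy hxy
        simp only [Finset.mem_coe, Finset.mem_filter] at hx hy
        have hg : groupOf (k + m) m (x : ℕ) = groupOf (k + m) m (y : ℕ) := by
          rw [← (hP x).1, ← (hP y).1, hx.2, hy.2]
        exact Fin.ext (pair_inj hl hm hg hxy)
    rw [Finset.card_range] at hcard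
    exact le_trans hcard (le_trans (sizeMax_le_m hl hm) le_rfl)
  have hnodes : ∀ F : Finset (Fin (Ng (k + m) m) × Fin n), F.card = m →
      (Finset.univ.filter (fun x : Fin (k + m) => P x ∈ F)).card ≤ m := by
    intro F hF
    have hcard : (Finset.univ.filter (fun x : Fin (k + m) => P x ∈ F)).card ≤ F.card := by
      apply Finset.card_le_card_of_injOn P
      · intro x hx
        simp only [Finset.mem_coe, Finset.mem_filter] at hx
        exact hx.2
      · exact fun x _ y _ h => hinj h
    omega
  refine ⟨hinj, hrack, hnodes, ?_, ?_⟩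
  · intro F hF
    have h := Finset.card_filter_add_card_filter_not
      (s := Finset.univ) (p := fun x : Fin (k + m) => P x ∈ F)
    rw [Finset.card_univ, Fintype.card_fin] at h
    have := hnodes F hF
    omega
  · intro j
    have h := Finset.card_filter_add_card_filter_not
      (s := Finset.univ) (p := fun x : Fin (k + m) => (P x).1 = j)
    rw [Finset.card_univ, Fintype.card_fin] at h
    have := hrack j
    simp only [ne_eq]
    omega
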